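/- arXiv:1607.00415 — 3 statements merged into one kernel-verified Lean document; each statement's English description precedes it below -/
import Mathlib

section
/- Let A be a finite set of d×d real matrices. The following are equivalent: (1) the joint spectral radius of A is strictly less than 1; (2) there exist a norm ‖·‖ on ℝ^d and a number q < 1 such that ‖A x‖ ≤ q‖x‖ for all A ∈ A and all x ∈ ℝ^d (all operators are simultaneous contractions in this norm). -/
open Filter

/-- The operator norm of a real `d × d` matrix induced by the sup-norm on `ℝ^d`. -/
noncomputable def mnorm {d : ℕ} (P : Matrix (Fin d) (Fin d) ℝ) : ℝ :=
  ‖LinearMap.toContinuousLinearMap (Matrix.toLin' P)‖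

/-- The set of all products of `k` matrices taken from the family `𝒜`. -/
def prodsOf {d : ℕ} (𝒜 : Set (Matrix (Fin d) (Fin d) ℝ)) (k : ℕ) :
    Set (Matrix (Fin d) (Fin d) ℝ) :=
  {P | ∃ l : List (Matrix (Fin d) (Fin d) ℝ), (∀ a ∈ l, a ∈ 𝒜) ∧ l.length = k ∧ l.prod = P}

section jsrAux

variable {d : ℕ} {𝒜 : Set (Matrix (Fin d) (Fin d) ℝ)}

lemma mnorm_nonneg (P : Matrix (Fin d) (Fin d) ℝ) : 0 ≤ mnorm P := norm_nonneg _

lemma mulVec_norm_le (P : Matrix (Fin d) (Fin d) ℝ) (x : Fin d → ℝ) :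
    ‖P.mulVec x‖ ≤ mnorm P * ‖x‖ := by
  have := (LinearMap.toContinuousLinearMap (Matrix.toLin' P)).le_opNorm x
  simpa [mnorm, Matrix.toLin'_apply] using this

lemma mnorm_le_bound {P : Matrix (Fin d) (Fin d) ℝ} {C : ℝ} (hC : 0 ≤ C)
    (h : ∀ x, ‖P.mulVec x‖ ≤ C * ‖x‖) : mnorm P ≤ C := by
  apply ContinuousLinearMap.opNorm_le_bound _ hC
  intro x
  simpa [Matrix.toLin'_apply] using h x

lemma one_mem_prodsOf_zero : (1 : Matrix (Fin d) (Fin d) ℝ) ∈ prodsOf 𝒜 0 :=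
  ⟨[], by simp, rfl, List.prod_nil⟩

lemma mul_mem_prodsOf_succ {P A : Matrix (Fin d) (Fin d) ℝ} {k : ℕ}
    (hP : P ∈ prodsOf 𝒜 k) (hA : A ∈ 𝒜) : P * A ∈ prodsOf 𝒜 (k + 1) := by
  obtain ⟨l, hl, hlen, hprod⟩ := hP
  refine ⟨l ++ [A], ?_, by simp [hlen], by simp [hprod]⟩
  intro b hb
  rcases List.mem_append.1 hb with h | h
  · exact hl b h
  · simp at h; exact h ▸ hA

lemma prodsOf_finite (hfin : 𝒜.Finite) (k : ℕ) : (prodsOf 𝒜 k).Finite := by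
  induction k with
  | zero =>
    apply Set.Finite.subset (Set.finite_singleton (1 : Matrix (Fin d) (Fin d) ℝ))
    rintro P ⟨l, hl, hlen, hprod⟩
    rw [List.length_eq_zero_iff] at hlen
    simp [hlen] at hprod
    simp [← hprod]
  | succ k ih =>
    apply Set.Finite.subset (Set.Finite.image2 (· * ·) hfin ih)
    rintro P ⟨l, hl, hlen, hprod⟩
    match l, hlen with
    | a :: t, hlen =>
      have ht : t.prod ∈ prodsOf 𝒜 k :=
        ⟨t, fun b hb => hl b (by simp [hb]), by simpa using hlen, rfl⟩
      have hPe : P = a * t.prod := by simp [← hprod]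
      rw [hPe]
      exact Set.mem_image2_of_mem (hl a (by simp)) ht

/-- The candidate extremal-norm value set. -/
def Sset (𝒜 : Set (Matrix (Fin d) (Fin d) ℝ)) (r : ℝ) (x : Fin d → ℝ) : Set ℝ :=
  {t | ∃ k P, P ∈ prodsOf 𝒜 k ∧ t = ‖P.mulVec x‖ / r ^ k}

lemma norm_mem_Sset (r : ℝ) (x : Fin d → ℝ) : ‖x‖ ∈ Sset 𝒜 r x :=
  ⟨0, 1, one_mem_prodsOf_zero, by simp [Matrix.one_mulVec]⟩

lemma Sset_nonempty (r : ℝ) (x : Fin d → ℝ) : (Sset 𝒜 r x).Nonempty :=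
  ⟨‖x‖, norm_mem_Sset r x⟩

lemma Sset_bddAbove {r C0 : ℝ} (hr : 0 < r)
    (hb : ∀ k, ∀ P ∈ prodsOf 𝒜 k, mnorm P ≤ C0 * r ^ k) (x : Fin d → ℝ) :
    ∀ t ∈ Sset 𝒜 r x, t ≤ C0 * ‖x‖ := by
  rintro t ⟨k, P, hP, rfl⟩
  have hrk : (0:ℝ) < r ^ k := pow_pos hr k
  rw [div_le_iff₀ hrk]
  calc ‖P.mulVec x‖ ≤ mnorm P * ‖x‖ := mulVec_norm_le P x
    _ ≤ (C0 * r ^ k) * ‖x‖ := by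
        apply mul_le_mul_of_nonneg_right (hb k P hP) (norm_nonneg x)
    _ = C0 * ‖x‖ * r ^ k := by ring

lemma Sset_bdd {r C0 : ℝ} (hr : 0 < r)
    (hb : ∀ k, ∀ P ∈ prodsOf 𝒜 k, mnorm P ≤ C0 * r ^ k) (x : Fin d → ℝ) :
    BddAbove (Sset 𝒜 r x) :=
  ⟨C0 * ‖x‖, fun t ht => Sset_bddAbove hr hb x t ht⟩


lemma seminorm_sum_le (N : Seminorm ℝ (Fin d → ℝ)) {ι : Type*} (s : Finset ι)
    (f : ι → (Fin d → ℝ)) : N (∑ i ∈ s, f i) ≤ ∑ i ∈ s, N (f i) := by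
  classical
  induction s using Finset.induction with
  | empty => simp
  | @insert a s h ih =>
    rw [Finset.sum_insert h, Finset.sum_insert h]
    calc N _ ≤ N _ + N _ := map_add_le_add N _ _
      _ ≤ _ := by linarith


end jsrAux

private theorem jsr_aux_forward {d : ℕ} (𝒜 : Set (Matrix (Fin d) (Fin d) ℝ))
    (hfin : 𝒜.Finite) (ρ : ℝ)
    (hρ : Tendsto (fun k : ℕ => sSup ((fun P => mnorm P ^ ((1 : ℝ) / k)) '' prodsOf 𝒜 k))
      atTop (nhds ρ)) (hρ1 : ρ < 1) :
    ∃ (N : Seminorm ℝ (Fin d → ℝ)) (q : ℝ), q < 1 ∧ (∀ x, x ≠ 0 → 0 < N x) ∧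
      ∀ A ∈ 𝒜, ∀ x : Fin d → ℝ, N (A.mulVec x) ≤ q * N x := by
  -- the sequence is nonnegative, hence ρ ≥ 0 and r := (ρ+1)/2 ∈ (0,1), ρ < r
  have hseq0 : ∀ k : ℕ, 0 ≤ sSup ((fun P => mnorm P ^ ((1 : ℝ) / k)) '' prodsOf 𝒜 k) := by
    intro k
    apply Real.sSup_nonneg
    rintro t ⟨P, hP, rfl⟩
    exact Real.rpow_nonneg (mnorm_nonneg P) _
  have hρ0 : 0 ≤ ρ := ge_of_tendsto' hρ hseq0
  set r : ℝ := (ρ + 1) / 2 with hr_def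
  have hρr : ρ < r := by rw [hr_def]; linarith
  have hr1 : r < 1 := by rw [hr_def]; linarith
  have hr : 0 < r := by rw [hr_def]; linarith
  -- eventually all products of length k have mnorm ≤ r ^ k
  obtain ⟨K, hK⟩ := (hρ.eventually_lt_const hρr).exists_forall_of_atTop
  have hev : ∀ k, K ≤ k → ∀ P ∈ prodsOf 𝒜 k, mnorm P ≤ r ^ k := by
    intro k hk P hP
    have h1 : mnorm P ^ ((1:ℝ)/k) ≤ sSup ((fun P => mnorm P ^ ((1 : ℝ) / k)) '' prodsOf 𝒜 k) := by
      apply le_csSup (((prodsOf_finite hfin k).image _).bddAbove)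
      exact ⟨P, hP, rfl⟩
    have h2 : mnorm P ^ ((1:ℝ)/k) ≤ r := h1.trans (hK k hk).le
    rcases Nat.eq_zero_or_pos k with hk0 | hk0
    · -- k = 0 but K ≤ 0 forces k=0 case; then exponent is 0; handle directly
      subst hk0
      obtain ⟨l, hl, hlen, hprod⟩ := hP
      rw [List.length_eq_zero_iff] at hlen
      rw [hlen] at hprod
      simp only [List.prod_nil] at hprod
      rw [← hprod, pow_zero]
      apply mnorm_le_bound zero_le_one
      intro x; simp [Matrix.one_mulVec]
    · have hkne : (k:ℝ) ≠ 0 := by exact_mod_cast hk0.ne'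
      have := Real.rpow_le_rpow (Real.rpow_nonneg (mnorm_nonneg P) _) h2 (le_of_lt (by positivity : (0:ℝ) < (k:ℝ)))
      rwa [← Real.rpow_mul (mnorm_nonneg P), one_div, inv_mul_cancel₀ hkne, Real.rpow_one,
        Real.rpow_natCast] at this
  -- uniform bound mnorm P ≤ C0 * r ^ k for all k
  set M : ℕ → ℝ := fun k => sSup (mnorm '' prodsOf 𝒜 k) with hM_def
  have hM : ∀ k, ∀ P ∈ prodsOf 𝒜 k, mnorm P ≤ M k := by
    intro k P hP
    exact le_csSup (((prodsOf_finite hfin k).image _).bddAbove) ⟨P, hP, rfl⟩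
  have hMnn : ∀ k, 0 ≤ M k := by
    intro k
    apply Real.sSup_nonneg
    rintro t ⟨P, hP, rfl⟩
    exact mnorm_nonneg P
  set C0 : ℝ := 1 + ∑ j ∈ Finset.range K, M j / r ^ j with hC0_def
  have hC0_1 : 1 ≤ C0 := by
    rw [hC0_def]
    have : 0 ≤ ∑ j ∈ Finset.range K, M j / r ^ j :=
      Finset.sum_nonneg fun j _ => div_nonneg (hMnn j) (pow_pos hr j).le
    linarith
  have hC0 : 0 < C0 := lt_of_lt_of_le one_pos hC0_1
  have hb : ∀ k, ∀ P ∈ prodsOf 𝒜 k, mnorm P ≤ C0 * r ^ k := by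
    intro k P hP
    rcases le_or_gt K k with hk | hk
    · calc mnorm P ≤ r ^ k := hev k hk P hP
        _ ≤ C0 * r ^ k := le_mul_of_one_le_left (pow_pos hr k).le hC0_1
    · have h1 : mnorm P ≤ M k := hM k P hP
      have h2 : M k / r ^ k ≤ C0 := by
        rw [hC0_def]
        have : M k / r ^ k ≤ ∑ j ∈ Finset.range K, M j / r ^ j :=
          Finset.single_le_sum (f := fun j => M j / r ^ j)
            (fun j _ => div_nonneg (hMnn j) (pow_pos hr j).le) (Finset.mem_range.2 hk)
        linarith
      calc mnorm P ≤ M k := h1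
        _ = (M k / r ^ k) * r ^ k := by field_simp
        _ ≤ C0 * r ^ k := mul_le_mul_of_nonneg_right h2 (pow_pos hr k).le
  -- build the seminorm
  have bdd : ∀ x : Fin d → ℝ, BddAbove (Sset 𝒜 r x) := Sset_bdd hr hb
  have ne : ∀ x : Fin d → ℝ, (Sset 𝒜 r x).Nonempty := Sset_nonempty r
  refine ⟨{ toFun := fun x => sSup (Sset 𝒜 r x)
            map_zero' := ?_
            add_le' := ?_
            neg' := ?_
            smul' := ?_ }, r, hr1, ?_, ?_⟩
  · have : Sset 𝒜 r (0 : Fin d → ℝ) = {0} := by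
      apply Set.eq_singleton_iff_unique_mem.2
      constructor
      · exact ⟨0, 1, one_mem_prodsOf_zero, by simp [Matrix.mulVec_zero]⟩
      · rintro t ⟨k, P, hP, rfl⟩
        simp [Matrix.mulVec_zero]
    show sSup (Sset 𝒜 r (0 : Fin d → ℝ)) = 0
    rw [this, csSup_singleton]
  · intro x y
    apply csSup_le (ne _)
    rintro t ⟨k, P, hP, rfl⟩
    have h1 : ‖P.mulVec (x + y)‖ / r ^ k ≤ ‖P.mulVec x‖ / r ^ k + ‖P.mulVec y‖ / r ^ k := by
      rw [← add_div, div_le_div_iff_of_pos_right (pow_pos hr k)]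
      rw [Matrix.mulVec_add]
      exact norm_add_le _ _
    refine h1.trans (add_le_add ?_ ?_)
    · exact le_csSup (bdd x) ⟨k, P, hP, rfl⟩
    · exact le_csSup (bdd y) ⟨k, P, hP, rfl⟩
  · intro x
    show sSup (Sset 𝒜 r (-x)) = sSup (Sset 𝒜 r x)
    congr 1
    ext t
    constructor
    · rintro ⟨k, P, hP, rfl⟩
      exact ⟨k, P, hP, by rw [Matrix.mulVec_neg, norm_neg]⟩
    · rintro ⟨k, P, hP, rfl⟩
      exact ⟨k, P, hP, by rw [Matrix.mulVec_neg, norm_neg]⟩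
  · intro a x
    have himg : Sset 𝒜 r (a • x) = (fun t => ‖a‖ * t) '' Sset 𝒜 r x := by
      ext t
      constructor
      · rintro ⟨k, P, hP, rfl⟩
        refine ⟨‖P.mulVec x‖ / r ^ k, ⟨k, P, hP, rfl⟩, ?_⟩
        rw [Matrix.mulVec_smul, norm_smul, mul_div_assoc]
      · rintro ⟨t, ⟨k, P, hP, rfl⟩, rfl⟩
        exact ⟨k, P, hP, by rw [Matrix.mulVec_smul, norm_smul, mul_div_assoc]⟩
    show sSup (Sset 𝒜 r (a • x)) = ‖a‖ * sSup (Sset 𝒜 r x)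
    rw [himg]
    exact (Monotone.map_csSup_of_continuousAt (continuousAt_const.mul continuousAt_id)
      (fun u v huv => mul_le_mul_of_nonneg_left huv (norm_nonneg a)) (ne x) (bdd x)).symm
  · intro x hx
    have h1 : ‖x‖ ≤ sSup (Sset 𝒜 r x) := le_csSup (bdd x) (norm_mem_Sset r x)
    have h2 : 0 < ‖x‖ := norm_pos_iff.2 hx
    exact lt_of_lt_of_le h2 h1
  · intro A hA x
    apply csSup_le (ne _)
    rintro t ⟨k, P, hP, rfl⟩
    have hPA : P * A ∈ prodsOf 𝒜 (k + 1) := mul_mem_prodsOf_succ hP hA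
    have heq : ‖P.mulVec (A.mulVec x)‖ / r ^ k
        = r * (‖(P * A).mulVec x‖ / r ^ (k + 1)) := by
      rw [Matrix.mulVec_mulVec]
      rw [pow_succ]
      field_simp
    rw [heq]
    apply mul_le_mul_of_nonneg_left _ hr.le
    exact le_csSup (bdd x) ⟨k + 1, P * A, hPA, rfl⟩


private theorem jsr_aux_reverse {d : ℕ} (𝒜 : Set (Matrix (Fin d) (Fin d) ℝ)) (ρ : ℝ)
    (hρ : Tendsto (fun k : ℕ => sSup ((fun P => mnorm P ^ ((1 : ℝ) / k)) '' prodsOf 𝒜 k))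
      atTop (nhds ρ))
    (h : ∃ (N : Seminorm ℝ (Fin d → ℝ)) (q : ℝ), q < 1 ∧ (∀ x, x ≠ 0 → 0 < N x) ∧
      ∀ A ∈ 𝒜, ∀ x : Fin d → ℝ, N (A.mulVec x) ≤ q * N x) : ρ < 1 := by
  obtain ⟨N, q, hq1, hpos, hcontr⟩ := h
  set q0 : ℝ := max q 0 with hq0_def
  have hq00 : 0 ≤ q0 := le_max_right _ _
  have hq01 : q0 < 1 := max_lt hq1 one_pos
  have hcontr' : ∀ A ∈ 𝒜, ∀ x, N (A.mulVec x) ≤ q0 * N x := by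
    intro A hA x
    exact (hcontr A hA x).trans
      (mul_le_mul_of_nonneg_right (le_max_left _ _) (apply_nonneg N x))
  have hlist : ∀ l : List (Matrix (Fin d) (Fin d) ℝ), (∀ a ∈ l, a ∈ 𝒜) →
      ∀ x, N (l.prod.mulVec x) ≤ q0 ^ l.length * N x := by
    intro l
    induction l with
    | nil => intro _ x; simp [Matrix.one_mulVec]
    | cons a t ih =>
      intro hmem x
      have h1 : (a :: t).prod.mulVec x = a.mulVec (t.prod.mulVec x) := by
        rw [List.prod_cons, ← Matrix.mulVec_mulVec]
      rw [h1]
      calc N (a.mulVec (t.prod.mulVec x)) ≤ q0 * N (t.prod.mulVec x) :=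
            hcontr' a (hmem a (by simp)) _
        _ ≤ q0 * (q0 ^ t.length * N x) :=
            mul_le_mul_of_nonneg_left (ih (fun b hb => hmem b (by simp [hb])) x) hq00
        _ = q0 ^ (a :: t).length * N x := by rw [List.length_cons, pow_succ]; ring
  -- obtain a uniform bound D ≥ 1 with mnorm P ≤ D * q0 ^ k for P ∈ prodsOf 𝒜 k
  have hD : ∃ D : ℝ, 1 ≤ D ∧ ∀ k, ∀ P ∈ prodsOf 𝒜 k, mnorm P ≤ D * q0 ^ k := by
    rcases Nat.eq_zero_or_pos d with hd | hd
    · subst hd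
      refine ⟨1, le_refl 1, fun k P hP => ?_⟩
      have h0 : mnorm P ≤ 0 := by
        apply mnorm_le_bound le_rfl
        intro x
        have : P.mulVec x = 0 := Subsingleton.elim _ _
        simp [this]
      calc mnorm P ≤ 0 := h0
        _ ≤ 1 * q0 ^ k := by positivity
    · -- norm-equivalence constants for N
      set C : ℝ := ∑ i, N (Pi.single i 1) with hC_def
      have hCnn : 0 ≤ C := Finset.sum_nonneg fun i _ => apply_nonneg N _
      have hupper : ∀ x : Fin d → ℝ, N x ≤ C * ‖x‖ := by
        intro x
        have hx : x = ∑ i, (x i) • (Pi.single i (1:ℝ) : Fin d → ℝ) := by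
          rw [← Finset.univ_sum_single x]
          congr 1
          ext i : 1
          rw [← Pi.single_smul]
          norm_num
        calc N x = N (∑ i, (x i) • (Pi.single i (1:ℝ) : Fin d → ℝ)) := by rw [← hx]
          _ ≤ ∑ i, N ((x i) • (Pi.single i (1:ℝ) : Fin d → ℝ)) := seminorm_sum_le N _ _
          _ ≤ ∑ i, ‖x‖ * N (Pi.single i 1) := by
              apply Finset.sum_le_sum
              intro i _
              rw [map_smul_eq_mul]
              apply mul_le_mul_of_nonneg_right _ (apply_nonneg N _)
              simpa [Real.norm_eq_abs] using norm_le_pi_norm x i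
          _ = C * ‖x‖ := by rw [← Finset.mul_sum, hC_def]; ring
      -- N is continuous
      have hNcont : Continuous fun x : Fin d → ℝ => N x := by
        apply (LipschitzWith.of_dist_le_mul (K := Real.toNNReal C) ?_).continuous
        intro x y
        rw [Real.dist_eq, dist_eq_norm, Real.coe_toNNReal _ hCnn]
        have hxy : N x - N y ≤ N (x - y) := by
          have := map_add_le_add N (x - y) y
          simp only [sub_add_cancel] at this
          linarith
        have hyx : N y - N x ≤ N (x - y) := by
          have := map_add_le_add N (y - x) x
          simp only [sub_add_cancel] at this
          have h2 : N (y - x) = N (x - y) := by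
            rw [← map_neg_eq_map N (y - x), neg_sub]
          linarith
        rw [abs_sub_le_iff]
        exact ⟨hxy.trans (hupper _), hyx.trans (hupper _)⟩
      -- minimum of N on the sphere
      haveI : Nonempty (Fin d) := ⟨⟨0, hd⟩⟩
      have hsne : (Metric.sphere (0 : Fin d → ℝ) 1).Nonempty :=
        NormedSpace.sphere_nonempty.2 zero_le_one
      obtain ⟨x0, hx0mem, hx0min⟩ :=
        (isCompact_sphere (0 : Fin d → ℝ) 1).exists_isMinOn hsne hNcont.continuousOn
      rw [isMinOn_iff] at hx0min
      have hx0 : ‖x0‖ = 1 := by simpa using hx0mem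
      have hx0ne : x0 ≠ 0 := by
        intro h0; rw [h0] at hx0; simp at hx0
      set c : ℝ := N x0 with hc_def
      have hcpos : 0 < c := hpos x0 hx0ne
      have hlower : ∀ x : Fin d → ℝ, c * ‖x‖ ≤ N x := by
        intro x
        rcases eq_or_ne x 0 with rfl | hx
        · simp
        · have hu : ‖(‖x‖⁻¹ • x)‖ = 1 := norm_smul_inv_norm hx
          have hmem : (‖x‖⁻¹ • x) ∈ Metric.sphere (0 : Fin d → ℝ) 1 := by
            simp [hu]
          have h1 : c ≤ N (‖x‖⁻¹ • x) := hx0min _ hmem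
          rw [map_smul_eq_mul] at h1
          have hxn : 0 < ‖x‖ := norm_pos_iff.2 hx
          rw [Real.norm_eq_abs, abs_of_pos (inv_pos.2 hxn)] at h1
          calc c * ‖x‖ ≤ (‖x‖⁻¹ * N x) * ‖x‖ := mul_le_mul_of_nonneg_right h1 hxn.le
            _ = N x := by field_simp
      refine ⟨max (C / c) 1, le_max_right _ _, fun k P hP => ?_⟩
      have hDnn : (0:ℝ) ≤ max (C / c) 1 := le_trans zero_le_one (le_max_right _ _)
      apply mnorm_le_bound (by positivity)
      intro x
      obtain ⟨l, hl, hlen, hprod⟩ := hP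
      have h1 : N (P.mulVec x) ≤ q0 ^ k * N x := by
        rw [← hprod, ← hlen]; exact hlist l hl x
      calc ‖P.mulVec x‖ = c⁻¹ * (c * ‖P.mulVec x‖) := by field_simp
        _ ≤ c⁻¹ * N (P.mulVec x) :=
            mul_le_mul_of_nonneg_left (hlower _) (inv_pos.2 hcpos).le
        _ ≤ c⁻¹ * (q0 ^ k * N x) := mul_le_mul_of_nonneg_left h1 (inv_pos.2 hcpos).le
        _ ≤ c⁻¹ * (q0 ^ k * (C * ‖x‖)) := by
            apply mul_le_mul_of_nonneg_left _ (inv_pos.2 hcpos).le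
            exact mul_le_mul_of_nonneg_left (hupper x) (pow_nonneg hq00 k)
        _ = (C / c) * q0 ^ k * ‖x‖ := by field_simp
        _ ≤ max (C / c) 1 * q0 ^ k * ‖x‖ := by
            apply mul_le_mul_of_nonneg_right _ (norm_nonneg x)
            exact mul_le_mul_of_nonneg_right (le_max_left _ _) (pow_nonneg hq00 k)
  obtain ⟨D, hD1, hDb⟩ := hD
  have hDpos : (0:ℝ) < D := lt_of_lt_of_le one_pos hD1
  -- the sequence is eventually bounded by D^(1/k) * q0
  have hbound : ∀ k : ℕ, 1 ≤ k →
      sSup ((fun P => mnorm P ^ ((1 : ℝ) / k)) '' prodsOf 𝒜 k) ≤ D ^ ((1:ℝ)/k) * q0 := by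
    intro k hk
    have hkne : (k:ℝ) ≠ 0 := by positivity
    apply Real.sSup_le
    · rintro t ⟨P, hP, rfl⟩
      have h1 : mnorm P ^ ((1:ℝ)/k) ≤ (D * q0 ^ k) ^ ((1:ℝ)/k) :=
        Real.rpow_le_rpow (mnorm_nonneg P) (hDb k P hP) (by positivity)
      have h2 : (D * q0 ^ k) ^ ((1:ℝ)/k) = D ^ ((1:ℝ)/k) * q0 := by
        rw [Real.mul_rpow hDpos.le (pow_nonneg hq00 k), ← Real.rpow_natCast q0 k,
          ← Real.rpow_mul hq00, mul_one_div, div_self hkne, Real.rpow_one]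
      rw [h2] at h1
      exact h1
    · positivity
  -- D^(1/k) * q0 → q0
  have hlim : Tendsto (fun k : ℕ => D ^ ((1:ℝ)/k) * q0) atTop (nhds q0) := by
    have h0 : Tendsto (fun k : ℕ => (1:ℝ)/k) atTop (nhds 0) := tendsto_one_div_atTop_nhds_zero_nat
    have hc : ContinuousAt (fun y : ℝ => D ^ y) 0 := Real.continuousAt_const_rpow hDpos.ne'
    have h1 := (hc.tendsto.comp h0).mul_const q0
    simpa [Function.comp, Real.rpow_zero] using h1
  have hle : ρ ≤ q0 := by
    apply le_of_tendsto_of_tendsto hρ hlim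
    filter_upwards [eventually_ge_atTop 1] with k hk
    exact hbound k hk
  linarith

/-- **Simultaneous contractibility criterion.** For a finite family `𝒜` of `d × d` real matrices
with joint spectral radius `ρ = lim_k max ‖Π‖^(1/k)`, one has `ρ < 1` if and only if there exist
a norm `N` on `ℝ^d` and a number `q < 1` such that `N (A x) ≤ q * N x` for all `A ∈ 𝒜` and all
`x ∈ ℝ^d`. -/
theorem jsr_lt_one_iff_contractions {d : ℕ} (𝒜 : Set (Matrix (Fin d) (Fin d) ℝ))
    (hfin : 𝒜.Finite) (ρ : ℝ)
    (hρ : Tendsto (fun k : ℕ => sSup ((fun P => mnorm P ^ ((1 : ℝ) / k)) '' prodsOf 𝒜 k))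
      atTop (nhds ρ)) :
    ρ < 1 ↔ ∃ (N : Seminorm ℝ (Fin d → ℝ)) (q : ℝ), q < 1 ∧ (∀ x, x ≠ 0 → 0 < N x) ∧
      ∀ A ∈ 𝒜, ∀ x : Fin d → ℝ, N (A.mulVec x) ≤ q * N x := by
  constructor
  · exact jsr_aux_forward 𝒜 hfin ρ hρ
  · exact jsr_aux_reverse 𝒜 ρ hρ
end

section
/- Let Π be a d×d real matrix and x ∈ ℝ^d with ‖x‖ = 1, ‖Π‖ ≤ 1 (operator norm), and ‖(Π − I)x‖ < δ. Then for every ε > 0 there exists δ > 0 (depending only on ε) such that spectralRadius(Π) > 1 − ε. -/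
open Filter

/-- The spectral radius of a real matrix: the maximal modulus of its (complex) eigenvalues. -/
noncomputable def specRad {d : ℕ} (P : Matrix (Fin d) (Fin d) ℝ) : ℝ :=
  sSup ((fun z : ℂ => ‖z‖) '' spectrum ℂ (P.map (fun a => (a : ℂ))))

section ElsnerAux
open Matrix Polynomial

lemma charpoly_eval_eq {d : ℕ} (M : Matrix (Fin d) (Fin d) ℂ) (r : ℂ) :
    M.charpoly.eval r = (Matrix.scalar (Fin d) r - M).det := by
  have h : (charmatrix M).map (evalRingHom r) = Matrix.scalar (Fin d) r - M := by
    ext i j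
    by_cases hij : i = j
    · subst hij
      simp [charmatrix_apply_eq, Matrix.scalar_apply]
    · simp [charmatrix_apply_ne _ _ _ hij, Matrix.scalar_apply, Matrix.diagonal_apply_ne _ hij]
  have := RingHom.map_det (evalRingHom r) (charmatrix M)
  rw [Matrix.charpoly]
  rw [show Polynomial.eval r (charmatrix M).det = (evalRingHom r) (charmatrix M).det from rfl,
    this, RingHom.mapMatrix_apply, h]

lemma mem_spec_iff {d : ℕ} (M : Matrix (Fin d) (Fin d) ℂ) (μ : ℂ) :
    μ ∈ spectrum ℂ M ↔ M.charpoly.eval μ = 0 := by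
  rw [spectrum.mem_iff, Matrix.isUnit_iff_isUnit_det, isUnit_iff_ne_zero, not_ne_iff,
    charpoly_eval_eq]
  congr!

lemma det_bound {d : ℕ} (M : Matrix (Fin d) (Fin d) ℝ) (C : ℝ) (hC : 0 ≤ C)
    (h : ∀ i j, |M i j| ≤ C) : |M.det| ≤ d.factorial * C ^ d := by
  rw [Matrix.det_apply]
  calc |∑ σ : Equiv.Perm (Fin d), Equiv.Perm.sign σ • ∏ i, M (σ i) i|
      ≤ ∑ σ : Equiv.Perm (Fin d), |Equiv.Perm.sign σ • ∏ i, M (σ i) i| :=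
        Finset.abs_sum_le_sum_abs _ _
    _ ≤ ∑ _σ : Equiv.Perm (Fin d), C ^ d := by
        refine Finset.sum_le_sum fun σ _ => ?_
        have hp : |∏ i, M (σ i) i| ≤ C ^ d := by
          rw [Finset.abs_prod]
          calc ∏ i, |M (σ i) i| ≤ ∏ _i : Fin d, C :=
                Finset.prod_le_prod (fun i _ => abs_nonneg _) (fun i _ => h _ _)
            _ = C ^ d := by simp
        rcases Int.units_eq_one_or (Equiv.Perm.sign σ) with hs | hs <;>
          simp [hs, hp, abs_neg]
    _ = d.factorial * C ^ d := by
        simp [Finset.card_univ, Fintype.card_perm]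

lemma mulVec_norm_le_s14 {d : ℕ} (M : Matrix (Fin d) (Fin d) ℝ) (C : ℝ) (hC : 0 ≤ C)
    (h : ∀ i j, |M i j| ≤ C) (v : Fin d → ℝ) : ‖M.mulVec v‖ ≤ d * C * ‖v‖ := by
  refine (pi_norm_le_iff_of_nonneg (by positivity)).mpr fun i => ?_
  rw [Real.norm_eq_abs]
  calc |M.mulVec v i| = |∑ j, M i j * v j| := rfl
    _ ≤ ∑ j, |M i j * v j| := Finset.abs_sum_le_sum_abs _ _
    _ ≤ ∑ _j : Fin d, C * ‖v‖ := by
        refine Finset.sum_le_sum fun j _ => ?_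
        rw [abs_mul]
        exact mul_le_mul (h i j) ((Real.norm_eq_abs _).symm.le.trans (norm_le_pi_norm v j))
          (abs_nonneg _) hC
    _ = d * C * ‖v‖ := by simp [mul_assoc]

lemma abs_prod_ge {a : ℝ} (ha : 0 ≤ a) (s : Multiset ℂ) (h : ∀ x ∈ s, a ≤ ‖x‖) :
    a ^ (Multiset.card s) ≤ ‖s.prod‖ := by
  induction s using Multiset.induction with
  | empty => simp
  | cons x s ih =>
    rw [Multiset.prod_cons, norm_mul, Multiset.card_cons, pow_succ']
    exact mul_le_mul (h x (Multiset.mem_cons_self _ _))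
      (ih fun y hy => h y (Multiset.mem_cons_of_mem hy)) (by positivity)
      (norm_nonneg _)

lemma entry_bound {d : ℕ} (P : Matrix (Fin d) (Fin d) ℝ) (h : mnorm P ≤ 1) (i j : Fin d) :
    |P i j| ≤ 1 := by
  have h2 : ‖P.mulVec (Pi.single j 1)‖ ≤ 1 := by
    have h3 := (LinearMap.toContinuousLinearMap (Matrix.toLin' P)).le_opNorm (Pi.single j (1:ℝ))
    simp only [LinearMap.coe_toContinuousLinearMap', Matrix.toLin'_apply, Pi.norm_single,
      norm_one, mul_one] at h3
    exact h3.trans h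
  have h1 : |P i j| = ‖(P.mulVec (Pi.single j 1)) i‖ := by
    rw [Matrix.mulVec_single]
    simp [Real.norm_eq_abs]
  rw [h1]
  exact (norm_le_pi_norm _ i).trans h2

end ElsnerAux

/-- **Elsner's lemma.** For every `ε > 0` there is `δ > 0` (depending only on `ε` and the
dimension) such that whenever `Π` is a `d × d` real matrix and `x ∈ ℝ^d` with `‖x‖ = 1`,
`‖Π‖ ≤ 1` (operator norm), and `‖Π x − x‖ < δ`, the spectral radius of `Π` exceeds `1 − ε`. -/
theorem elsner_lemma (d : ℕ) (ε : ℝ) (hε : 0 < ε) :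
    ∃ δ : ℝ, 0 < δ ∧ ∀ (P : Matrix (Fin d) (Fin d) ℝ) (x : Fin d → ℝ),
      ‖x‖ = 1 → mnorm P ≤ 1 → ‖P.mulVec x - x‖ < δ → 1 - ε < specRad P := by
  rcases Nat.eq_zero_or_pos d with hd | hd
  · refine ⟨1, one_pos, fun P x hx _ _ => absurd hx ?_⟩
    subst hd
    rw [Subsingleton.elim x 0, norm_zero]
    exact zero_ne_one
  set ε' := min ε 1 with hε'def
  have hε'0 : 0 < ε' := lt_min hε one_pos
  have hε'1 : ε' ≤ 1 := min_le_right _ _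
  have hε'ε : ε' ≤ ε := min_le_left _ _
  set K : ℝ := d * (d.factorial * 2 ^ d) with hKdef
  have hK0 : 0 < K := by
    have : (0:ℝ) < d := by exact_mod_cast hd
    positivity
  refine ⟨ε' ^ d / (K + 1), by positivity, fun P x hx hP hδ => ?_⟩
  set A := P - 1 with hAdef
  have hAentry : ∀ i j, |A i j| ≤ 2 := by
    intro i j
    have h1 := entry_bound P hP i j
    have h2 : |(1 : Matrix (Fin d) (Fin d) ℝ) i j| ≤ 1 := by
      rw [Matrix.one_apply]
      split <;> simp
    calc |A i j| = |P i j - (1 : Matrix (Fin d) (Fin d) ℝ) i j| := rfl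
      _ ≤ |P i j| + |(1 : Matrix (Fin d) (Fin d) ℝ) i j| := abs_sub _ _
      _ ≤ 2 := by linarith
  have hadj : ∀ i j, |A.adjugate i j| ≤ d.factorial * 2 ^ d := by
    intro i j
    rw [Matrix.adjugate_apply]
    refine det_bound _ 2 (by norm_num) fun a b => ?_
    rw [Matrix.updateRow_apply]
    split
    · rcases eq_or_ne b i with hbi | hbi
      · subst hbi; simp
      · rw [Pi.single_eq_of_ne hbi]; simp
    · exact hAentry a b
  -- upper bound on |det A|
  have hdet_up : |A.det| < ε' ^ d := by
    have h1 : A.det • x = A.adjugate.mulVec (A.mulVec x) := by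
      rw [Matrix.mulVec_mulVec, Matrix.adjugate_mul, Matrix.smul_mulVec,
        Matrix.one_mulVec]
    have h2 : ‖A.mulVec x‖ < ε' ^ d / (K + 1) := by
      have hAx : A.mulVec x = P.mulVec x - x := by
        rw [hAdef, Matrix.sub_mulVec, Matrix.one_mulVec]
      rwa [hAx]
    have h3 : |A.det| ≤ K * ‖A.mulVec x‖ := by
      calc |A.det| = ‖A.det • x‖ := by rw [norm_smul, hx, mul_one, Real.norm_eq_abs]
        _ = ‖A.adjugate.mulVec (A.mulVec x)‖ := by rw [h1]
        _ ≤ d * (d.factorial * 2 ^ d) * ‖A.mulVec x‖ :=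
            mulVec_norm_le_s14 _ _ (by positivity) hadj _
        _ = K * ‖A.mulVec x‖ := rfl
    have h4 : K * ‖A.mulVec x‖ < K * (ε' ^ d / (K + 1)) :=
      mul_lt_mul_of_pos_left h2 hK0
    have h5 : K * (ε' ^ d / (K + 1)) < ε' ^ d := by
      rw [mul_div_assoc', div_lt_iff₀ (by linarith)]
      nlinarith [pow_pos hε'0 d]
    linarith
  -- complex side
  set Pc := P.map (fun a => (a : ℂ)) with hPcdef
  have hmonic : Pc.charpoly.Monic := Pc.charpoly_monic
  have hsplit : Pc.charpoly.Splits := IsAlgClosed.splits _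
  have hdeg : Pc.charpoly.natDegree = d := by
    simpa using Pc.charpoly_natDegree_eq_dim
  have hcard : Multiset.card Pc.charpoly.roots = d := by
    exact ((Polynomial.splits_iff_card_roots).mp hsplit).trans hdeg
  -- BddAbove
  have hfin : (spectrum ℂ Pc).Finite := by
    refine Set.Finite.subset (Pc.charpoly.roots.toFinset : Finset ℂ).finite_toSet fun μ hμ => ?_
    rw [Finset.mem_coe, Multiset.mem_toFinset, Polynomial.mem_roots hmonic.ne_zero]
    exact (mem_spec_iff _ _).mp hμ
  have hbdd : BddAbove ((fun z : ℂ => ‖z‖) '' spectrum ℂ Pc) := (hfin.image _).bddAbove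
  by_contra hcon
  push_neg at hcon
  have hall : ∀ μ ∈ Pc.charpoly.roots, ε' ≤ ‖1 - μ‖ := by
    intro μ hμ
    have hspec : μ ∈ spectrum ℂ Pc := (mem_spec_iff _ _).mpr (Polynomial.isRoot_of_mem_roots hμ)
    have hle : ‖μ‖ ≤ 1 - ε :=
      le_trans (le_csSup hbdd ⟨μ, hspec, rfl⟩) hcon
    have : 1 - ‖μ‖ ≤ ‖1 - μ‖ := by
      have := norm_sub_norm_le (1 : ℂ) μ
      simpa using this
    have hμε : ‖μ‖ ≤ 1 - ε' := by linarith
    linarith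
  have heval : Pc.charpoly.eval 1 = ((Pc.charpoly.roots.map (fun μ => 1 - μ)).prod) := by
    conv_lhs => rw [hsplit.eq_prod_roots_of_monic hmonic]
    rw [Polynomial.eval_multiset_prod, Multiset.map_map]
    simp
  have hprod : ε' ^ d ≤ ‖Pc.charpoly.eval 1‖ := by
    rw [heval]
    have := abs_prod_ge hε'0.le (Pc.charpoly.roots.map (fun μ => 1 - μ)) ?_
    · rwa [Multiset.card_map, hcard] at this
    · intro y hy
      obtain ⟨μ, hμ, rfl⟩ := Multiset.mem_map.mp hy
      exact hall μ hμ
  have h3 : ‖Pc.charpoly.eval 1‖ = |A.det| := by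
    rw [charpoly_eval_eq]
    have hrw : Matrix.scalar (Fin d) (1:ℂ) - Pc = (1 - P).map Complex.ofRealHom := by
      ext i j
      simp [Matrix.scalar_apply, Matrix.map_apply, Matrix.sub_apply, Matrix.one_apply,
        Matrix.diagonal_apply, apply_ite]
      rfl
    rw [hrw, ← RingHom.mapMatrix_apply, ← RingHom.map_det]
    rw [show (1 - P) = -A from (neg_sub P 1).symm]
    rw [Matrix.det_neg]
    simp [Complex.norm_real, abs_mul]
  rw [h3] at hprod
  linarith
end

section
/- Let M₁, …, Mₙ be complete metric spaces attached to vertices of a directed multigraph G, with maps F_{ji}: M_i → M_j attached to edges, each a contraction (Lipschitz with constant q < 1, for a uniform q), with every vertex having at least one incoming edge. Then there exists a unique collection of nonempty compact sets K_i ⊆ M_i satisfying K_j = ⋃ over edges i → j of F_{ji}(K_i) for all j, provided the spaces M_i are such that the Hausdorff-metric hyperspaces are complete (e.g., the M_i are complete). -/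
open EMetric TopologicalSpace Set

lemma nonemptyCompacts_edist_eq {α : Type*} [EMetricSpace α] (s t : NonemptyCompacts α) :
    edist s t = hausdorffEdist (s : Set α) t := rfl

/-- The graph-directed union operator on families of sets. -/
def hutchS {V E : Type*} (src tgt : E → V) (M : V → Type*)
    (F : ∀ e : E, M (src e) → M (tgt e)) (K : ∀ v, Set (M v)) (j : V) : Set (M j) :=
  {y : M j | ∃ (e : E) (h : tgt e = j), ∃ x ∈ K (src e), y = cast (congrArg M h) (F e x)}

lemma hutchS_eq_iUnion {V E : Type*} (src tgt : E → V) (M : V → Type*)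
    (F : ∀ e : E, M (src e) → M (tgt e)) (K : ∀ v, Set (M v)) (j : V) :
    hutchS src tgt M F K j = ⋃ (e : E) (h : tgt e = j),
      (fun x => cast (congrArg M h) (F e x)) '' K (src e) := by
  ext y
  simp only [hutchS, mem_setOf_eq, mem_iUnion, mem_image]
  constructor
  · rintro ⟨e, h, x, hx, rfl⟩; exact ⟨e, h, x, hx, rfl⟩
  · rintro ⟨e, h, x, hx, rfl⟩; exact ⟨e, h, x, hx, rfl⟩

lemma hutchS_isCompact {V E : Type*} [Fintype E] (src tgt : E → V) (M : V → Type*)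
    [∀ v, MetricSpace (M v)] (F : ∀ e : E, M (src e) → M (tgt e))
    {q : NNReal} (hF : ∀ e, LipschitzWith q (F e))
    (K : ∀ v, Set (M v)) (hK : ∀ v, IsCompact (K v)) (j : V) :
    IsCompact (hutchS src tgt M F K j) := by
  rw [hutchS_eq_iUnion]
  apply isCompact_iUnion
  intro e
  rcases eq_or_ne (tgt e) j with h | h
  · subst h
    have : (⋃ (h : tgt e = tgt e),
        (fun x => cast (congrArg M h) (F e x)) '' (K (src e))) = F e '' (K (src e)) := by
      simp
    rw [this]
    exact (hK (src e)).image (hF e).continuous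
  · simp [h]

lemma hutchS_nonempty {V E : Type*} (src tgt : E → V) (M : V → Type*)
    (F : ∀ e : E, M (src e) → M (tgt e)) (hin : ∀ v : V, ∃ e : E, tgt e = v)
    (K : ∀ v, Set (M v)) (hK : ∀ v, (K v).Nonempty) (j : V) :
    (hutchS src tgt M F K j).Nonempty := by
  obtain ⟨e, he⟩ := hin j
  obtain ⟨x, hx⟩ := hK (src e)
  exact ⟨cast (congrArg M he) (F e x), e, he, x, hx, rfl⟩

/-- **Graph-directed Hutchinson fixed point theorem.** Let complete, nonempty metric spaces
`M v` be attached to the vertices of a directed multigraph with finitely many edges, and let a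
map `F e : M (src e) → M (tgt e)` be attached to each edge, each Lipschitz with a uniform
constant `q < 1`. If every vertex has at least one incoming edge, then there is a unique
collection of nonempty compact sets `K v ⊆ M v` with
`K j = ⋃_{e : tgt e = j} F e '' K (src e)` for every `j`. -/
theorem graph_directed_hutchinson {V : Type*} {E : Type*} [Fintype E]
    (src tgt : E → V) (M : V → Type*) [∀ v, MetricSpace (M v)] [∀ v, CompleteSpace (M v)]
    [∀ v, Nonempty (M v)]
    (F : ∀ e : E, M (src e) → M (tgt e)) (q : NNReal) (hq : q < 1)
    (hF : ∀ e, LipschitzWith q (F e)) (hin : ∀ v : V, ∃ e : E, tgt e = v) :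
    ∃! K : ∀ v, Set (M v),
      (∀ v, IsCompact (K v) ∧ (K v).Nonempty) ∧
      ∀ j : V, K j = {y : M j | ∃ (e : E) (h : tgt e = j), ∃ x ∈ K (src e),
        y = cast (congrArg M h) (F e x)} := by
  classical
  have : Fintype V := Fintype.ofSurjective tgt fun v => (hin v).imp fun e h => h
  set T : (∀ v, NonemptyCompacts (M v)) → ∀ v, NonemptyCompacts (M v) := fun K j =>
    ⟨⟨hutchS src tgt M F (fun v => (K v : Set (M v))) j,
      hutchS_isCompact src tgt M F hF _ (fun v => (K v).isCompact) j⟩,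
      hutchS_nonempty src tgt M F hin _ (fun v => (K v).nonempty) j⟩ with hT
  -- T is a contraction
  have key : ∀ (K K' : ∀ v, NonemptyCompacts (M v)) (j : V),
      hausdorffEdist (hutchS src tgt M F (fun v => (K v : Set (M v))) j)
        (hutchS src tgt M F (fun v => (K' v : Set (M v))) j) ≤ q * edist K K' := by
    have main : ∀ (K K' : ∀ v, NonemptyCompacts (M v)) (j : V),
        ∀ y ∈ hutchS src tgt M F (fun v => (K v : Set (M v))) j,
        ∃ z ∈ hutchS src tgt M F (fun v => (K' v : Set (M v))) j,
          edist y z ≤ q * edist K K' := by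
      intro K K' j y hy
      obtain ⟨e, h, x, hx, rfl⟩ := hy
      subst h
      obtain ⟨x', hx', hdx⟩ := (K' (src e)).isCompact.exists_infEdist_eq_edist
        (K' (src e)).nonempty x
      refine ⟨F e x', ⟨e, rfl, x', hx', rfl⟩, ?_⟩
      simp only [cast_eq]
      calc edist (F e x) (F e x') ≤ q * edist x x' := hF e x x'
        _ ≤ q * edist K K' := by
            gcongr
            rw [← hdx]
            calc infEdist x ((K' (src e) : Set (M (src e))))
                ≤ hausdorffEdist ((K (src e) : Set (M (src e)))) ((K' (src e))) :=
                  infEdist_le_hausdorffEdist_of_mem hx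
              _ = edist (K (src e)) (K' (src e)) :=
                  (nonemptyCompacts_edist_eq (K (src e)) (K' (src e))).symm
              _ ≤ edist K K' := edist_le_pi_edist K K' (src e)
    intro K K' j
    apply hausdorffEdist_le_of_mem_edist
    · exact main K K' j
    · intro y hy
      obtain ⟨z, hz, hd⟩ := main K' K j y hy
      exact ⟨z, hz, by rwa [edist_comm K' K] at hd⟩
  have hlip : LipschitzWith q T := by
    intro K K'
    rw [edist_pi_le_iff]
    intro j
    rw [hT]
    rw [nonemptyCompacts_edist_eq]
    exact key K K' j
  have hcontr : ContractingWith q T := ⟨hq, hlip⟩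
  have : Nonempty (∀ v, NonemptyCompacts (M v)) :=
    ⟨fun v => ⟨⟨{Classical.arbitrary (M v)}, isCompact_singleton⟩, singleton_nonempty _⟩⟩
  set K₀ := ContractingWith.fixedPoint T hcontr with hK₀
  have hfix : Function.IsFixedPt T K₀ := hcontr.fixedPoint_isFixedPt
  refine ⟨fun v => (K₀ v : Set (M v)), ⟨fun v => ⟨(K₀ v).isCompact, (K₀ v).nonempty⟩, ?_⟩, ?_⟩
  · intro j
    have h1 := congrFun hfix j
    have h2 := congrArg (fun s : NonemptyCompacts (M j) => (s : Set (M j))) h1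
    exact h2.symm
  · rintro K' ⟨hcn, heq⟩
    set L : ∀ v, NonemptyCompacts (M v) := fun v => ⟨⟨K' v, (hcn v).1⟩, (hcn v).2⟩ with hL
    have hLfix : Function.IsFixedPt T L := by
      funext j
      apply NonemptyCompacts.ext
      exact (heq j).symm
    have hLK : L = K₀ := hcontr.fixedPoint_unique hLfix
    funext v
    exact congrArg (fun s : NonemptyCompacts (M v) => (s : Set (M v))) (congrFun hLK v)
end
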